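/- arXiv:math/0609259 — 2 statements merged into one kernel-verified Lean document; each statement's English description precedes it below -/
import Mathlib

section
/- Let F, G be probability measures on ℝ^K and ℝ respectively, and K_h ∈ L²(ℝ). Define D(y) = ∫ Π_k K_h(y_k − u_k) dF(u) − Π_k ∫ K_h(y_k − u) dG_k(u) where G_k are the marginals of F. Then ∫_{ℝ^K} D(y)² dy = ∬ Π_k K₂(u_k − v_k) dF(u)dF(v) + Π_k ∬ K₂(u − v) dG_k(u)dG_k(v) − 2 ∫ Π_k [∫ K₂(u_k − v) dG_k(v)] dF(u), where K₂(u) = ∫ K_h(u+v)K_h(v) dv. -/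
set_option maxHeartbeats 1000000

open MeasureTheory Measure

section KernelTrickAux

/-- General-measure version of `integral_fintype_prod_eq_prod` for `Fin n` and `ℝ`. -/
theorem kt_integral_pi_prod {n : ℕ} (μ : Fin n → Measure ℝ) [∀ i, SigmaFinite (μ i)]
    (f : Fin n → ℝ → ℝ) :
    ∫ x : Fin n → ℝ, ∏ i, f i (x i) ∂Measure.pi μ = ∏ i, ∫ x, f i x ∂μ i := by
  induction n with
  | zero =>
      simp [integral_const, Measure.pi_univ, measureReal_def]
  | succ n n_ih =>
      calc
        _ = ∫ x : ℝ × (Fin n → ℝ),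
            f 0 x.1 * ∏ i : Fin n, f (Fin.succ i) (x.2 i)
              ∂((μ 0).prod (Measure.pi fun i => μ (Fin.succ i))) := by
          rw [← ((measurePreserving_piFinSuccAbove (fun i => (μ i)) 0).symm).integral_comp']
          simp_rw [MeasurableEquiv.piFinSuccAbove_symm_apply, Fin.insertNthEquiv,
            Fin.prod_univ_succ, Fin.insertNth_zero, Equiv.coe_fn_mk, Fin.cons_succ,
            Fin.zero_succAbove, Fin.cons_zero, cast_eq]
        _ = (∫ x, f 0 x ∂μ 0) * ∏ i : Fin n, ∫ x : ℝ, f (Fin.succ i) x ∂μ (Fin.succ i) := by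
          rw [← n_ih, ← integral_prod_mul]
        _ = ∏ i, ∫ x, f i x ∂μ i := by rw [Fin.prod_univ_succ]

variable {g : ℝ → ℝ}

theorem kt_shift_memL2 (hg2 : MemLp g 2 (volume : Measure ℝ)) (a : ℝ) :
    MemLp (fun t => g (t - a)) 2 (volume : Measure ℝ) :=
  hg2.comp_measurePreserving (measurePreserving_sub_right volume a)

theorem kt_shift_eLpNorm (hg : AEStronglyMeasurable g (volume : Measure ℝ)) (a : ℝ) :
    eLpNorm (fun t => g (t - a)) 2 volume = eLpNorm g 2 volume :=
  eLpNorm_comp_measurePreserving hg (measurePreserving_sub_right volume a)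

theorem kt_mul_shift_integrable (hg2 : MemLp g 2 (volume : Measure ℝ)) (a b : ℝ) :
    Integrable (fun t => g (t - a) * g (t - b)) (volume : Measure ℝ) := by
  have h := (kt_shift_memL2 hg2 b).smul (kt_shift_memL2 hg2 a)
    (p := 2) (q := 2) (r := 1)
  rw [memLp_one_iff_integrable] at h
  simpa [smul_eq_mul, Pi.mul_def] using h

theorem kt_mul_shift_norm_integral_le (hg2 : MemLp g 2 (volume : Measure ℝ)) (a b : ℝ) :
    ∫ t, ‖g (t - a) * g (t - b)‖ ≤ (eLpNorm g 2 volume * eLpNorm g 2 volume).toReal := by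
  have hm : AEStronglyMeasurable (fun t => g (t - a) * g (t - b)) (volume : Measure ℝ) :=
    (kt_mul_shift_integrable hg2 a b).aestronglyMeasurable
  have h1 : ∫ t, ‖g (t - a) * g (t - b)‖ =
      (eLpNorm (fun t => g (t - a) * g (t - b)) 1 volume).toReal := by
    rw [eLpNorm_one_eq_lintegral_enorm, integral_norm_eq_lintegral_enorm hm]
  rw [h1]
  apply ENNReal.toReal_mono
  · exact ENNReal.mul_ne_top hg2.eLpNorm_ne_top hg2.eLpNorm_ne_top
  · have := eLpNorm_smul_le_mul_eLpNorm (f := fun t => g (t - b)) (φ := fun t => g (t - a))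
      (p := 2) (q := 2) (r := 1) (μ := (volume : Measure ℝ))
      (kt_shift_memL2 hg2 b).1 (kt_shift_memL2 hg2 a).1
    rw [kt_shift_eLpNorm hg2.1 a, kt_shift_eLpNorm hg2.1 b] at this
    simpa [smul_eq_mul, Pi.mul_def] using this

theorem kt_K2_formula (a b : ℝ) :
    ∫ t, g (t - a) * g (t - b) = ∫ v, g ((a - b) + v) * g v := by
  have h := integral_add_right_eq_self (μ := (volume : Measure ℝ))
    (fun t => g (t - a) * g (t - b)) a
  rw [← h]
  congr 1
  ext s
  rw [mul_comm]
  ring_nf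

theorem kt_K2g_meas (hg : StronglyMeasurable g) :
    StronglyMeasurable (fun u => ∫ v, g (u + v) * g v) := by
  apply StronglyMeasurable.integral_prod_right' (f := fun p : ℝ × ℝ => g (p.1 + p.2) * g p.2)
  exact ((hg.measurable.comp (measurable_fst.add measurable_snd)).mul
    (hg.measurable.comp measurable_snd)).stronglyMeasurable

theorem kt_K2g_bound (hg2 : MemLp g 2 (volume : Measure ℝ)) (u : ℝ) :
    |∫ v, g (u + v) * g v| ≤ (eLpNorm g 2 volume * eLpNorm g 2 volume).toReal := by
  have h : (fun v => g (u + v) * g v) = fun v => g (v - (-u)) * g (v - 0) := by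
    ext v; rw [sub_neg_eq_add, sub_zero, add_comm]
  rw [h]
  calc |∫ v, g (v - (-u)) * g (v - 0)| ≤ ∫ v, ‖g (v - (-u)) * g (v - 0)‖ := by
        rw [← Real.norm_eq_abs]; exact norm_integral_le_integral_norm _
    _ ≤ _ := kt_mul_shift_norm_integral_le hg2 (-u) 0

/-- the set of pairs (y,a) with `y k - c a` in a Lebesgue-null set is null for `volume ⊗ ρ`. -/
theorem kt_bad_null {K : ℕ} {α : Type*} [MeasurableSpace α] (ρ : Measure α) [SFinite ρ]
    {N : Set ℝ} (hN : MeasurableSet N) (hN0 : volume N = 0) (k : Fin K)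
    {c : α → ℝ} (hc : Measurable c) :
    (volume.prod ρ : Measure ((Fin K → ℝ) × α)) {p | p.1 k - c p.2 ∈ N} = 0 := by
  have hT : Measurable fun p : (Fin K → ℝ) × α => p.1 k - c p.2 :=
    ((measurable_pi_apply k).comp measurable_fst).sub (hc.comp measurable_snd)
  have hS : MeasurableSet {p : (Fin K → ℝ) × α | p.1 k - c p.2 ∈ N} := hT hN
  have hswap : (volume.prod ρ : Measure ((Fin K → ℝ) × α)) {p | p.1 k - c p.2 ∈ N}
      = (ρ.prod (volume : Measure (Fin K → ℝ)))
        (Prod.swap ⁻¹' {p : (Fin K → ℝ) × α | p.1 k - c p.2 ∈ N}) := by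
    rw [← Measure.prod_swap, Measure.map_apply measurable_swap hS]
  rw [hswap, Measure.prod_apply (measurable_swap hS)]
  have hz : ∀ a : α, (volume : Measure (Fin K → ℝ))
      (Prod.mk a ⁻¹' (Prod.swap ⁻¹' {p : (Fin K → ℝ) × α | p.1 k - c p.2 ∈ N})) = 0 := by
    intro a
    have h1 : (volume : Measure ℝ) {t | t - c a ∈ N} = 0 := by
      have h : {t : ℝ | t - c a ∈ N} = (fun t => t - c a) ⁻¹' N := rfl
      rw [h, (measurePreserving_sub_right volume (c a)).measure_preimage hN.nullMeasurableSet]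
      exact hN0
    have h2 : (Prod.mk a ⁻¹' (Prod.swap ⁻¹' {p : (Fin K → ℝ) × α | p.1 k - c p.2 ∈ N}))
        = (fun y : Fin K → ℝ => y k) ⁻¹' {t | t - c a ∈ N} := rfl
    rw [h2]
    rw [show (volume : Measure (Fin K → ℝ)) = Measure.pi (fun _ => volume) from rfl]
    exact Measure.pi_eval_preimage_null _ h1
  rw [lintegral_congr hz, lintegral_zero]

section master
variable {K : ℕ} (μ ν : Measure (Fin K → ℝ)) [IsFiniteMeasure μ] [IsFiniteMeasure ν]

theorem kt_master_meas (hg : StronglyMeasurable g) :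
    Measurable (fun p : ((Fin K → ℝ) × (Fin K → ℝ)) × (Fin K → ℝ) =>
    ∏ k, (g (p.2 k - p.1.1 k) * g (p.2 k - p.1.2 k))) := by
  apply Finset.measurable_prod
  intro k _
  exact (hg.measurable.comp (((measurable_pi_apply k).comp measurable_snd).sub
      ((measurable_pi_apply k).comp (measurable_fst.comp measurable_fst)))).mul
    (hg.measurable.comp (((measurable_pi_apply k).comp measurable_snd).sub
      ((measurable_pi_apply k).comp (measurable_snd.comp measurable_fst))))

theorem kt_master_integrable (hg : StronglyMeasurable g)
    (hg2 : MemLp g 2 (volume : Measure ℝ)) :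
    Integrable (fun p : ((Fin K → ℝ) × (Fin K → ℝ)) × (Fin K → ℝ) =>
      ∏ k, (g (p.2 k - p.1.1 k) * g (p.2 k - p.1.2 k)))
      ((μ.prod ν).prod (volume : Measure (Fin K → ℝ))) := by
  set C : ℝ := (eLpNorm g 2 volume * eLpNorm g 2 volume).toReal with hC
  have hCnn : 0 ≤ C := ENNReal.toReal_nonneg
  apply (integrable_prod_iff (kt_master_meas hg).aestronglyMeasurable).2
  constructor
  · apply Filter.Eventually.of_forall
    intro uv
    exact Integrable.fintype_prod (f := fun k t => g (t - uv.1 k) * g (t - uv.2 k))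
      (fun k => kt_mul_shift_integrable hg2 _ _)
  · apply Integrable.mono' (integrable_const (C ^ K))
    · exact ((kt_master_meas hg).norm.aestronglyMeasurable).integral_prod_right'
    · apply Filter.Eventually.of_forall
      intro uv
      have h0 : 0 ≤ ∫ y : Fin K → ℝ, ‖∏ k, (g (y k - uv.1 k) * g (y k - uv.2 k))‖ :=
        integral_nonneg (fun _ => norm_nonneg _)
      rw [Real.norm_eq_abs, abs_of_nonneg h0]
      have h1 : ∀ y : Fin K → ℝ, ‖∏ k, (g (y k - uv.1 k) * g (y k - uv.2 k))‖
          = ∏ k, ‖g (y k - uv.1 k) * g (y k - uv.2 k)‖ := by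
        intro y; rw [Real.norm_eq_abs, Finset.abs_prod]; rfl
      calc ∫ y : Fin K → ℝ, ‖∏ k, (g (y k - uv.1 k) * g (y k - uv.2 k))‖
          = ∫ y : Fin K → ℝ, ∏ k, ‖g (y k - uv.1 k) * g (y k - uv.2 k)‖ := by
            simp_rw [h1]
        _ = ∏ k, ∫ t : ℝ, ‖g (t - uv.1 k) * g (t - uv.2 k)‖ :=
            integral_fintype_prod_eq_prod (𝕜 := ℝ) (ι := Fin K)
              (fun k t => ‖g (t - uv.1 k) * g (t - uv.2 k)‖)
        _ ≤ ∏ _k : Fin K, C := Finset.prod_le_prod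
              (fun k _ => integral_nonneg (fun _ => norm_nonneg _))
              (fun k _ => kt_mul_shift_norm_integral_le hg2 _ _)
        _ = C ^ K := by simp [Finset.prod_const]

theorem kt_master_step1 (y : Fin K → ℝ) :
    (∫ u, ∏ k, g (y k - u k) ∂μ) * (∫ v, ∏ k, g (y k - v k) ∂ν)
      = ∫ uv : (Fin K → ℝ) × (Fin K → ℝ),
          ∏ k, (g (y k - uv.1 k) * g (y k - uv.2 k)) ∂(μ.prod ν) := by
  rw [← integral_prod_mul]
  congr 1
  ext uv
  rw [Finset.prod_mul_distrib]

theorem kt_master_K2_integrable (hg : StronglyMeasurable g)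
    (hg2 : MemLp g 2 (volume : Measure ℝ)) :
    Integrable (fun uv : (Fin K → ℝ) × (Fin K → ℝ) =>
      ∏ k, (∫ w, g ((uv.1 k - uv.2 k) + w) * g w)) (μ.prod ν) := by
  set C : ℝ := (eLpNorm g 2 volume * eLpNorm g 2 volume).toReal with hC
  have hmeas : Measurable (fun uv : (Fin K → ℝ) × (Fin K → ℝ) =>
      ∏ k, (∫ w, g ((uv.1 k - uv.2 k) + w) * g w)) := by
    apply Finset.measurable_prod
    intro k _
    exact (kt_K2g_meas hg).measurable.comp
      (((measurable_pi_apply k).comp measurable_fst).sub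
        ((measurable_pi_apply k).comp measurable_snd))
  apply Integrable.mono' (integrable_const (C ^ K)) hmeas.aestronglyMeasurable
  apply Filter.Eventually.of_forall
  intro uv
  rw [Real.norm_eq_abs, Finset.abs_prod]
  calc (∏ k, |∫ w, g ((uv.1 k - uv.2 k) + w) * g w|)
      ≤ ∏ _k : Fin K, C := Finset.prod_le_prod (fun _ _ => abs_nonneg _)
        (fun k _ => kt_K2g_bound hg2 _)
    _ = C ^ K := by simp [Finset.prod_const]

theorem kt_master_eq (hg : StronglyMeasurable g) (hg2 : MemLp g 2 (volume : Measure ℝ)) :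
    ∫ y : Fin K → ℝ, (∫ u, ∏ k, g (y k - u k) ∂μ) * (∫ v, ∏ k, g (y k - v k) ∂ν)
      = ∫ u, ∫ v, ∏ k, (∫ w, g ((u k - v k) + w) * g w) ∂ν ∂μ := by
  have hInt := kt_master_integrable μ ν hg hg2
  calc ∫ y : Fin K → ℝ, (∫ u, ∏ k, g (y k - u k) ∂μ) * (∫ v, ∏ k, g (y k - v k) ∂ν)
      = ∫ y : Fin K → ℝ, ∫ uv : (Fin K → ℝ) × (Fin K → ℝ),
          ∏ k, (g (y k - uv.1 k) * g (y k - uv.2 k)) ∂(μ.prod ν) := by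
        congr 1; ext y; exact kt_master_step1 μ ν y
    _ = ∫ uv : (Fin K → ℝ) × (Fin K → ℝ), (∫ y : Fin K → ℝ,
          ∏ k, (g (y k - uv.1 k) * g (y k - uv.2 k))) ∂(μ.prod ν) := by
        exact (integral_integral_swap (f := fun (uv : (Fin K → ℝ) × (Fin K → ℝ))
          (y : Fin K → ℝ) => ∏ k, (g (y k - uv.1 k) * g (y k - uv.2 k))) hInt).symm
    _ = ∫ uv : (Fin K → ℝ) × (Fin K → ℝ),
          ∏ k, (∫ w, g ((uv.1 k - uv.2 k) + w) * g w) ∂(μ.prod ν) := by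
        congr 1; ext uv
        rw [integral_fintype_prod_volume_eq_prod (𝕜 := ℝ) (ι := Fin K)
          (fun k t => g (t - uv.1 k) * g (t - uv.2 k))]
        exact Finset.prod_congr rfl (fun k _ => kt_K2_formula _ _)
    _ = ∫ u, ∫ v, ∏ k, (∫ w, g ((u k - v k) + w) * g w) ∂ν ∂μ :=
        integral_prod _ (kt_master_K2_integrable μ ν hg hg2)

theorem kt_master_int_y (hg : StronglyMeasurable g) (hg2 : MemLp g 2 (volume : Measure ℝ)) :
    Integrable (fun y : Fin K → ℝ =>
      (∫ u, ∏ k, g (y k - u k) ∂μ) * (∫ v, ∏ k, g (y k - v k) ∂ν))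
      (volume : Measure (Fin K → ℝ)) := by
  have h := (kt_master_integrable μ ν hg hg2).integral_prod_right
  apply h.congr
  apply Filter.Eventually.of_forall
  intro y
  exact (kt_master_step1 μ ν y).symm
end master

end KernelTrickAux

/-- the kernel trick: ∫ D(y)² dy expressed via the autocorrelation kernel K₂. -/
theorem stmt8 {K : ℕ} (hK : 1 ≤ K)
    (F : Measure (Fin K → ℝ)) [IsProbabilityMeasure F]
    (G : Fin K → Measure ℝ) (hG : ∀ k, G k = F.map (fun u => u k))
    (Kh : ℝ → ℝ) (hKh : MemLp Kh 2 (volume : Measure ℝ))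
    (K₂ : ℝ → ℝ) (hK₂ : ∀ u : ℝ, K₂ u = ∫ v : ℝ, Kh (u + v) * Kh v)
    (D : (Fin K → ℝ) → ℝ)
    (hD : ∀ y, D y = (∫ u, ∏ k, Kh (y k - u k) ∂F)
          - ∏ k, ∫ u, Kh (y k - u) ∂(G k)) :
    ∫ y : Fin K → ℝ, (D y)^2
      = (∫ u, ∫ v, ∏ k, K₂ (u k - v k) ∂F ∂F)
        + (∏ k, ∫ u, ∫ v, K₂ (u - v) ∂(G k) ∂(G k))
        - 2 * ∫ u, ∏ k, (∫ v, K₂ (u k - v) ∂(G k)) ∂F := by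
  classical
  -- measurable representative of Kh
  set g : ℝ → ℝ := hKh.1.mk Kh with hgdef
  have hg : StronglyMeasurable g := hKh.1.stronglyMeasurable_mk
  have hgKh : Kh =ᵐ[volume] g := hKh.1.ae_eq_mk
  have hg2 : MemLp g 2 (volume : Measure ℝ) := hKh.ae_eq hgKh
  -- K₂ in terms of g
  have hK2g : ∀ u : ℝ, K₂ u = ∫ w, g (u + w) * g w := by
    intro u
    rw [hK₂ u]
    apply integral_congr_ae
    have h1 : (fun v : ℝ => Kh (u + v)) =ᵐ[volume] (fun v => g (u + v)) := by
      have hmap : (volume : Measure ℝ).map (fun v : ℝ => u + v) = volume :=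
        MeasureTheory.map_add_left_eq_self (volume : Measure ℝ) u
      have habs : (volume : Measure ℝ).map (fun v : ℝ => u + v) ≪ volume := by
        rw [hmap]
      exact ae_eq_comp' (f := fun v : ℝ => u + v) (g := Kh) (g' := g)
        (measurable_const_add u).aemeasurable hgKh habs
    exact h1.mul hgKh
  -- probability measures
  haveI hGP : ∀ k, IsProbabilityMeasure (G k) := by
    intro k
    rw [hG k]
    exact Measure.isProbabilityMeasure_map (measurable_pi_apply k).aemeasurable
  set P : Measure (Fin K → ℝ) := Measure.pi G with hPdef
  haveI : IsProbabilityMeasure P := by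
    constructor
    rw [hPdef, Measure.pi_univ]
    simp
  -- null set where Kh and g differ
  have hset : (volume : Measure ℝ) {x | ¬ Kh x = g x} = 0 := ae_iff.mp hgKh
  set N : Set ℝ := toMeasurable volume {x | ¬ Kh x = g x} with hNdef
  have hNmeas : MeasurableSet N := measurableSet_toMeasurable _ _
  have hN0 : volume N = 0 := by rw [hNdef, measure_toMeasurable]; exact hset
  have hNsub : {x : ℝ | ¬ Kh x = g x} ⊆ N := subset_toMeasurable _ _
  -- a.e. replacement in the F-term
  have hA : ∀ᵐ y : Fin K → ℝ,
      (∫ u, ∏ k, Kh (y k - u k) ∂F) = ∫ u, ∏ k, g (y k - u k) ∂F := by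
    have hk : ∀ k : Fin K, ∀ᵐ p : (Fin K → ℝ) × (Fin K → ℝ) ∂(volume.prod F),
        Kh (p.1 k - p.2 k) = g (p.1 k - p.2 k) := by
      intro k
      exact ae_iff.mpr (measure_mono_null (fun p hp => hNsub hp)
        (kt_bad_null F hNmeas hN0 k (measurable_pi_apply k)))
    have hall : ∀ᵐ p : (Fin K → ℝ) × (Fin K → ℝ) ∂(volume.prod F),
        ∀ k, Kh (p.1 k - p.2 k) = g (p.1 k - p.2 k) := ae_all_iff.mpr hk
    have h2 := Measure.ae_ae_of_ae_prod hall
    filter_upwards [h2] with y hy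
    apply integral_congr_ae
    filter_upwards [hy] with u hu
    exact Finset.prod_congr rfl (fun k _ => hu k)
  -- a.e. replacement in the marginal terms
  have hB : ∀ᵐ y : Fin K → ℝ, ∀ k : Fin K,
      (∫ u, Kh (y k - u) ∂(G k)) = ∫ u, g (y k - u) ∂(G k) := by
    apply ae_all_iff.mpr
    intro k
    have hk : ∀ᵐ p : (Fin K → ℝ) × ℝ ∂(volume.prod (G k)),
        Kh (p.1 k - p.2) = g (p.1 k - p.2) := by
      exact ae_iff.mpr (measure_mono_null (fun p hp => hNsub hp)
        (kt_bad_null (G k) hNmeas hN0 k measurable_id))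
    have h2 := Measure.ae_ae_of_ae_prod hk
    filter_upwards [h2] with y hy
    exact integral_congr_ae hy
  -- identification of D with the g-version
  have hDg : ∀ᵐ y : Fin K → ℝ, D y =
      (∫ u, ∏ k, g (y k - u k) ∂F) - ∫ v, ∏ k, g (y k - v k) ∂P := by
    filter_upwards [hA, hB] with y h1 h2
    rw [hD y, h1]
    congr 1
    rw [kt_integral_pi_prod G (fun k t => g (y k - t))]
    exact Finset.prod_congr rfl (fun k _ => h2 k)
  -- rewrite the kernel
  simp only [hK2g]
  -- integrability of the three quadratic terms
  have hAA := kt_master_int_y F F hg hg2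
  have hAB := kt_master_int_y F P hg hg2
  have hBB := kt_master_int_y P P hg hg2
  -- expand the square
  have hexp : ∫ y : Fin K → ℝ, (D y)^2
      = (∫ y : Fin K → ℝ, (∫ u, ∏ k, g (y k - u k) ∂F) * (∫ v, ∏ k, g (y k - v k) ∂F))
        - 2 * (∫ y : Fin K → ℝ, (∫ u, ∏ k, g (y k - u k) ∂F) * (∫ v, ∏ k, g (y k - v k) ∂P))
        + ∫ y : Fin K → ℝ, (∫ u, ∏ k, g (y k - u k) ∂P) * (∫ v, ∏ k, g (y k - v k) ∂P) := by
    have h1 : ∫ y : Fin K → ℝ, (D y)^2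
        = ∫ y : Fin K → ℝ,
          ((∫ u, ∏ k, g (y k - u k) ∂F) * (∫ v, ∏ k, g (y k - v k) ∂F)
          - 2 * ((∫ u, ∏ k, g (y k - u k) ∂F) * (∫ v, ∏ k, g (y k - v k) ∂P))
          + (∫ u, ∏ k, g (y k - u k) ∂P) * (∫ v, ∏ k, g (y k - v k) ∂P)) := by
      apply integral_congr_ae
      filter_upwards [hDg] with y hy
      rw [hy]; ring
    have i1 : Integrable (fun y : Fin K → ℝ =>
        (∫ u, ∏ k, g (y k - u k) ∂F) * (∫ v, ∏ k, g (y k - v k) ∂F)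
        - 2 * ((∫ u, ∏ k, g (y k - u k) ∂F) * (∫ v, ∏ k, g (y k - v k) ∂P)))
        (volume : Measure (Fin K → ℝ)) := hAA.sub (hAB.const_mul 2)
    rw [h1, integral_add i1 hBB, integral_sub hAA (hAB.const_mul 2), integral_const_mul]
  rw [hexp, kt_master_eq F F hg hg2, kt_master_eq F P hg hg2, kt_master_eq P P hg hg2]
  -- convert the P-integrals into products of G-integrals
  have hinner : ∀ u : Fin K → ℝ,
      ∫ v, ∏ k, (∫ w, g ((u k - v k) + w) * g w) ∂P
        = ∏ k, ∫ t, (∫ w, g ((u k - t) + w) * g w) ∂(G k) := by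
    intro u
    exact kt_integral_pi_prod G (fun k t => ∫ w, g ((u k - t) + w) * g w)
  have hterm2 : ∫ u, ∫ v, ∏ k, (∫ w, g ((u k - v k) + w) * g w) ∂P ∂P
      = ∏ k, ∫ u, ∫ v, (∫ w, g ((u - v) + w) * g w) ∂(G k) ∂(G k) := by
    calc ∫ u, ∫ v, ∏ k, (∫ w, g ((u k - v k) + w) * g w) ∂P ∂P
        = ∫ u, ∏ k, (∫ t, (∫ w, g ((u k - t) + w) * g w) ∂(G k)) ∂P := by
          congr 1; ext u; exact hinner u
      _ = ∏ k, ∫ u, ∫ v, (∫ w, g ((u - v) + w) * g w) ∂(G k) ∂(G k) :=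
          kt_integral_pi_prod G (fun k s => ∫ t, (∫ w, g ((s - t) + w) * g w) ∂(G k))
  have hterm3 : ∫ u, ∫ v, ∏ k, (∫ w, g ((u k - v k) + w) * g w) ∂P ∂F
      = ∫ u, ∏ k, (∫ t, (∫ w, g ((u k - t) + w) * g w) ∂(G k)) ∂F := by
    congr 1; ext u; exact hinner u
  rw [hterm2, hterm3]
  ring
end

section
/- Let K : ℝ → ℝ be nonnegative integrable with ∫ K = 1 and lim_{|x|→∞} |x|K(x) = 0 (Parzen–Rosenblatt kernel), and let p : ℝ → ℝ be a bounded density continuous at t. Then lim_{h→0} ∫ (1/h) K((t − u)/h) p(u) du = p(t). -/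
open MeasureTheory Filter

lemma stmt11_change (K p : ℝ → ℝ) (t : ℝ) {h : ℝ} (hh : 0 < h) :
    ∫ u : ℝ, (1 / h) * K ((t - u) / h) * p u
      = ∫ v : ℝ, K v * p (t - h * v) := by
  set F : ℝ → ℝ := fun u => (1 / h) * K ((t - u) / h) * p u with hF
  have e1 : ∀ v : ℝ, K v * p (t - h * v) = F (t - h * v) * h := by
    intro v
    have hv : (t - (t - h * v)) / h = v := by field_simp; ring
    simp only [hF, hv]
    field_simp
  have e2 : (∫ v : ℝ, F (t - h * v)) = |h⁻¹| * ∫ w : ℝ, F (t - w) := by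
    simpa [smul_eq_mul] using Measure.integral_comp_mul_left (fun w => F (t - w)) h
  have e3 : (∫ w : ℝ, F (t - w)) = ∫ u : ℝ, F u := integral_sub_left_eq_self F volume t
  symm
  calc ∫ v : ℝ, K v * p (t - h * v)
      = ∫ v : ℝ, F (t - h * v) * h := by simp_rw [e1]
    _ = (∫ v : ℝ, F (t - h * v)) * h := integral_mul_const _ _
    _ = |h⁻¹| * (∫ u : ℝ, F u) * h := by rw [e2, e3]
    _ = ∫ u : ℝ, F u := by
        rw [abs_of_pos (inv_pos.mpr hh)]
        field_simp

/-- Bochner's lemma: for a Parzen–Rosenblatt kernel K and a bounded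
density p continuous at t, lim_{h→0⁺} ∫ (1/h) K((t−u)/h) p(u) du = p(t). -/
theorem stmt11 (K : ℝ → ℝ) (hK0 : ∀ x, 0 ≤ K x) (hKi : Integrable K)
    (hK1 : ∫ x : ℝ, K x = 1)
    (hKt : Tendsto (fun x : ℝ => |x| * K x) (Filter.cocompact ℝ) (nhds 0))
    (p : ℝ → ℝ) (hp0 : ∀ x, 0 ≤ p x) (hpi : Integrable p) (hp1 : ∫ x : ℝ, p x = 1)
    (M : ℝ) (hpb : ∀ x, p x ≤ M)
    (t : ℝ) (hcont : ContinuousAt p t) :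
    Tendsto (fun h : ℝ => ∫ u : ℝ, (1 / h) * K ((t - u) / h) * p u)
      (nhdsWithin 0 (Set.Ioi 0)) (nhds (p t)) := by
  have hmain : Tendsto (fun h : ℝ => ∫ v : ℝ, K v * p (t - h * v))
      (nhdsWithin 0 (Set.Ioi 0)) (nhds (p t)) := by
    have hint : ∫ v : ℝ, K v * p t = p t := by
      rw [integral_mul_const, hK1, one_mul]
    rw [← hint]
    apply tendsto_integral_filter_of_dominated_convergence (fun v => K v * M)
    · filter_upwards [self_mem_nhdsWithin] with h hh
      have h1 : Measure.QuasiMeasurePreserving (fun v : ℝ => h * v) (volume : Measure ℝ) volume := by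
        refine ⟨measurable_const_mul h, ?_⟩
        rw [Real.map_volume_mul_left (ne_of_gt hh)]
        exact Measure.smul_absolutelyContinuous
      have hq : Measure.QuasiMeasurePreserving (fun v : ℝ => t - h * v) volume volume :=
        (quasiMeasurePreserving_sub_left volume t).comp h1
      exact hKi.aestronglyMeasurable.mul
        (hpi.aestronglyMeasurable.comp_quasiMeasurePreserving hq)
    · filter_upwards with h
      filter_upwards with v
      have h1 : 0 ≤ K v * p (t - h * v) := mul_nonneg (hK0 v) (hp0 _)
      rw [Real.norm_eq_abs, abs_of_nonneg h1]
      exact mul_le_mul_of_nonneg_left (hpb _) (hK0 v)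
    · exact hKi.mul_const M
    · filter_upwards with v
      apply Tendsto.const_mul
      apply hcont.tendsto.comp
      have hc : Continuous (fun h : ℝ => t - h * v) := by continuity
      have : Tendsto (fun h : ℝ => t - h * v) (nhds 0) (nhds t) := by
        simpa using hc.tendsto 0
      exact this.mono_left nhdsWithin_le_nhds
  apply hmain.congr'
  filter_upwards [self_mem_nhdsWithin] with h hh
  exact (stmt11_change K p t hh).symm
end
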